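/- Csiszár sum identity: for random variables M and sequences Y₁ⁿ, Y₂ⁿ on finite alphabets, ∑_{i=1}^n I(Y_{2,i+1}^n; Y_{1,i} | M, Y₁^{i−1}) = ∑_{i=1}^n I(Y₁^{i−1}; Y_{2,i} | M, Y_{2,i+1}^n). -/

import Mathlib

open Finset

/-- The distribution of a random variable `Z` on a finite probability space
with probability mass function `p`. -/
noncomputable def distOf {Ω α : Type*} [Fintype Ω] [DecidableEq α]
    (p : Ω → ℝ) (Z : Ω → α) (z : α) : ℝ :=
  ∑ ω, if Z ω = z then p ω else 0

/-- Shannon entropy (in nats) of a random variable `Z` on a finite probability space. -/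
noncomputable def entOf {Ω α : Type*} [Fintype Ω] [Fintype α] [DecidableEq α]
    (p : Ω → ℝ) (Z : Ω → α) : ℝ :=
  -∑ z, distOf p Z z * Real.log (distOf p Z z)

/-- Conditional mutual information `I(A;B|C) = H(A,C) + H(B,C) − H(A,B,C) − H(C)`. -/
noncomputable def cmiOf {Ω α β γ : Type*} [Fintype Ω] [Fintype α] [DecidableEq α]
    [Fintype β] [DecidableEq β] [Fintype γ] [DecidableEq γ]
    (p : Ω → ℝ) (A : Ω → α) (B : Ω → β) (C : Ω → γ) : ℝ :=
  entOf p (fun ω => (A ω, C ω)) + entOf p (fun ω => (B ω, C ω))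
    - entOf p (fun ω => (A ω, B ω, C ω)) - entOf p C

/-- The prefix `y^i = (y_1, …, y_i)` of a length-`n` sequence (empty when `i = 0`). -/
def prefixSeq {α : Type*} (n : ℕ) (y : Fin n → α) (i : ℕ) : Fin (min i n) → α :=
  fun j => y ⟨j.val, by have := j.isLt; omega⟩

/-- The suffix `y_{i+1}^n = (y_{i+1}, …, y_n)` of a length-`n` sequence, i.e. the
sequence obtained by dropping the first `i` entries. -/
def suffixSeq {α : Type*} (n : ℕ) (y : Fin n → α) (i : ℕ) : Fin (n - i) → α :=
  fun j => y ⟨i + j.val, by have := j.isLt; omega⟩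

lemma entOf_congr {Ω α β : Type*} [Fintype Ω] [Fintype α] [DecidableEq α]
    [Fintype β] [DecidableEq β] (p : Ω → ℝ) (Z : Ω → α) (W : Ω → β)
    (f : α → β) (g : β → α) (hf : ∀ ω, W ω = f (Z ω)) (hg : ∀ ω, Z ω = g (W ω)) :
    entOf p Z = entOf p W := by
  have hz : ∀ z ∈ (univ : Finset α), z ∉ Finset.image Z Finset.univ →
      distOf p Z z * Real.log (distOf p Z z) = 0 := by
    intro z _ hz
    have h0 : distOf p Z z = 0 := by
      refine Finset.sum_eq_zero fun ω _ => if_neg fun h => hz ?_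
      exact Finset.mem_image.2 ⟨ω, Finset.mem_univ ω, h⟩
    simp [h0]
  have hw : ∀ w ∈ (univ : Finset β), w ∉ Finset.image W Finset.univ →
      distOf p W w * Real.log (distOf p W w) = 0 := by
    intro w _ hw
    have h0 : distOf p W w = 0 := by
      refine Finset.sum_eq_zero fun ω _ => if_neg fun h => hw ?_
      exact Finset.mem_image.2 ⟨ω, Finset.mem_univ ω, h⟩
    simp [h0]
  unfold entOf
  rw [← Finset.sum_subset (Finset.subset_univ (Finset.image Z Finset.univ)) hz,
      ← Finset.sum_subset (Finset.subset_univ (Finset.image W Finset.univ)) hw]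
  congr 1
  refine Finset.sum_nbij' f g ?_ ?_ ?_ ?_ ?_
  · rintro z hz
    obtain ⟨ω, -, rfl⟩ := Finset.mem_image.1 hz
    exact Finset.mem_image.2 ⟨ω, Finset.mem_univ ω, hf ω⟩
  · rintro w hw
    obtain ⟨ω, -, rfl⟩ := Finset.mem_image.1 hw
    exact Finset.mem_image.2 ⟨ω, Finset.mem_univ ω, hg ω⟩
  · rintro z hz
    obtain ⟨ω, -, rfl⟩ := Finset.mem_image.1 hz
    rw [← hf ω, ← hg ω]
  · rintro w hw
    obtain ⟨ω, -, rfl⟩ := Finset.mem_image.1 hw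
    rw [← hg ω, ← hf ω]
  · rintro z hz
    obtain ⟨ω₀, -, rfl⟩ := Finset.mem_image.1 hz
    have key : distOf p Z (Z ω₀) = distOf p W (f (Z ω₀)) := by
      refine Finset.sum_congr rfl fun ω _ => ?_
      refine if_congr ?_ rfl rfl
      constructor
      · intro h; rw [hf ω, h]
      · intro h
        rw [hg ω, h, ← hf ω₀, ← hg ω₀]
    rw [key]

lemma apply_fin_congr {γ : Type*} {n : ℕ} (y : Fin n → γ) {a b : ℕ}
    (ha : a < n) (hb : b < n) (h : a = b) : y ⟨a, ha⟩ = y ⟨b, hb⟩ := by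
  subst h; rfl

lemma telescope (F : ℕ → ℕ → ℝ) (n : ℕ) :
    ∑ k ∈ Finset.range n, (F k (k+1) + F (k+1) n - F (k+1) (k+1) - F k n)
      = ∑ k ∈ Finset.range n, (F k (k+1) + F 0 k - F k k - F 0 (k+1)) := by
  have t1 := Finset.sum_range_sub (fun k => F k n) n
  have t2 := Finset.sum_range_sub (fun k => F k k) n
  have t3 := Finset.sum_range_sub (fun k => F 0 k) n
  have expand : ∀ k ∈ Finset.range n,
      F k (k+1) + F (k+1) n - F (k+1) (k+1) - F k n
        = (F k (k+1) + F 0 k - F k k - F 0 (k+1))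
          + (((F (k+1) n - F k n) - (F (k+1) (k+1) - F k k)) + (F 0 (k+1) - F 0 k)) := by
    intro k _; ring
  rw [Finset.sum_congr rfl expand, Finset.sum_add_distrib]
  have hzero : ∑ k ∈ Finset.range n,
      (((F (k+1) n - F k n) - (F (k+1) (k+1) - F k k)) + (F 0 (k+1) - F 0 k)) = 0 := by
    rw [Finset.sum_add_distrib, Finset.sum_sub_distrib]
    rw [t1, t2, t3]; ring
  rw [hzero, add_zero]


/-- Csiszár sum identity:
`∑_{i=1}^n I(Y_{2,i+1}^n; Y_{1,i} | M, Y₁^{i−1}) = ∑_{i=1}^n I(Y₁^{i−1}; Y_{2,i} | M, Y_{2,i+1}^n)`.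
Here the 1-based index `i` corresponds to `i : Fin n` (0-based), so `Y₁^{i−1}` is the
prefix of length `i.val` and `Y_{2,i+1}^n` drops the first `i.val + 1` entries. -/
theorem csiszar_sum_identity
    {Ω 𝓜 α β : Type*} [Fintype Ω] [Fintype 𝓜] [DecidableEq 𝓜]
    [Fintype α] [DecidableEq α] [Fintype β] [DecidableEq β]
    (n : ℕ) (p : Ω → ℝ) (hp0 : ∀ ω, 0 ≤ p ω) (hp1 : ∑ ω, p ω = 1)
    (M : Ω → 𝓜) (Y1 : Ω → Fin n → α) (Y2 : Ω → Fin n → β) :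
    ∑ i : Fin n,
        cmiOf p (fun ω => suffixSeq n (Y2 ω) (i.val + 1)) (fun ω => Y1 ω i)
          (fun ω => (M ω, prefixSeq n (Y1 ω) i.val))
      = ∑ i : Fin n,
          cmiOf p (fun ω => prefixSeq n (Y1 ω) i.val) (fun ω => Y2 ω i)
            (fun ω => (M ω, suffixSeq n (Y2 ω) (i.val + 1))) := by
  classical
  set E : ℕ → ℕ → ℝ := fun a b =>
    entOf p (fun ω => (M ω, prefixSeq n (Y1 ω) a, suffixSeq n (Y2 ω) b)) with hE
  have h1 : ∀ k : Fin n,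
      cmiOf p (fun ω => suffixSeq n (Y2 ω) (k.val + 1)) (fun ω => Y1 ω k)
          (fun ω => (M ω, prefixSeq n (Y1 ω) k.val))
        = E k.val (k.val+1) + E (k.val+1) n - E (k.val+1) (k.val+1) - E k.val n := by
    intro k
    have hk := k.isLt
    unfold cmiOf
    have e1 : entOf p (fun ω => (suffixSeq n (Y2 ω) (k.val+1), (M ω, prefixSeq n (Y1 ω) k.val)))
        = E k.val (k.val+1) :=
      entOf_congr p _ _ (fun x => (x.2.1, x.2.2, x.1)) (fun y => (y.2.2, (y.1, y.2.1)))
        (fun ω => rfl) (fun ω => rfl)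
    have e2 : entOf p (fun ω => (Y1 ω k, (M ω, prefixSeq n (Y1 ω) k.val)))
        = E (k.val+1) n := by
      refine entOf_congr p _ _
        (fun x => (x.2.1,
          fun j : Fin (min (k.val+1) n) =>
            if h : j.val < min k.val n then x.2.2 ⟨j.val, h⟩ else x.1,
          fun j : Fin (n - n) => absurd j.isLt (by omega)))
        (fun y => (y.2.1 ⟨k.val, by omega⟩, (y.1,
          fun j : Fin (min k.val n) => y.2.1 ⟨j.val, by have := j.isLt; omega⟩)))
        ?_ ?_
      · intro ω
        refine Prod.ext rfl (Prod.ext ?_ ?_)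
        · funext j
          have hj := j.isLt
          by_cases h : j.val < min k.val n
          · simp only [dif_pos h]
            exact apply_fin_congr (Y1 ω) _ _ rfl
          · simp only [dif_neg h]
            exact apply_fin_congr (Y1 ω) _ _ (by omega)
        · funext j
          exact absurd j.isLt (by omega)
      · intro ω
        refine Prod.ext ?_ (Prod.ext rfl ?_)
        · exact (apply_fin_congr (Y1 ω) _ _ rfl)
        · funext j
          exact apply_fin_congr (Y1 ω) _ _ rfl
    have e3 : entOf p (fun ω => (suffixSeq n (Y2 ω) (k.val+1), Y1 ω k,
          (M ω, prefixSeq n (Y1 ω) k.val)))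
        = E (k.val+1) (k.val+1) := by
      refine entOf_congr p _ _
        (fun x => (x.2.2.1,
          fun j : Fin (min (k.val+1) n) =>
            if h : j.val < min k.val n then x.2.2.2 ⟨j.val, h⟩ else x.2.1,
          x.1))
        (fun y => (y.2.2, y.2.1 ⟨k.val, by omega⟩, (y.1,
          fun j : Fin (min k.val n) => y.2.1 ⟨j.val, by have := j.isLt; omega⟩)))
        ?_ ?_
      · intro ω
        refine Prod.ext rfl (Prod.ext ?_ rfl)
        funext j
        have hj := j.isLt
        by_cases h : j.val < min k.val n
        · simp only [dif_pos h]
          exact apply_fin_congr (Y1 ω) _ _ rfl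
        · simp only [dif_neg h]
          exact apply_fin_congr (Y1 ω) _ _ (by omega)
      · intro ω
        refine Prod.ext rfl (Prod.ext ?_ (Prod.ext rfl ?_))
        · exact apply_fin_congr (Y1 ω) _ _ rfl
        · funext j
          exact apply_fin_congr (Y1 ω) _ _ rfl
    have e4 : entOf p (fun ω => (M ω, prefixSeq n (Y1 ω) k.val)) = E k.val n := by
      refine entOf_congr p _ _
        (fun x => (x.1, x.2, fun j : Fin (n - n) => absurd j.isLt (by omega)))
        (fun y => (y.1, y.2.1)) ?_ (fun ω => rfl)
      intro ω
      refine Prod.ext rfl (Prod.ext rfl ?_)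
      funext j
      exact absurd j.isLt (by omega)
    rw [e1, e2, e3, e4]
  have h2 : ∀ k : Fin n,
      cmiOf p (fun ω => prefixSeq n (Y1 ω) k.val) (fun ω => Y2 ω k)
          (fun ω => (M ω, suffixSeq n (Y2 ω) (k.val + 1)))
        = E k.val (k.val+1) + E 0 k.val - E k.val k.val - E 0 (k.val+1) := by
    intro k
    have hk := k.isLt
    unfold cmiOf
    have e1 : entOf p (fun ω => (prefixSeq n (Y1 ω) k.val, (M ω, suffixSeq n (Y2 ω) (k.val+1))))
        = E k.val (k.val+1) :=
      entOf_congr p _ _ (fun x => (x.2.1, x.1, x.2.2)) (fun y => (y.2.1, (y.1, y.2.2)))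
        (fun ω => rfl) (fun ω => rfl)
    have e2 : entOf p (fun ω => (Y2 ω k, (M ω, suffixSeq n (Y2 ω) (k.val+1))))
        = E 0 k.val := by
      refine entOf_congr p _ _
        (fun x => (x.2.1,
          fun j : Fin (min 0 n) => absurd j.isLt (by omega),
          fun j : Fin (n - k.val) =>
            if h : 0 < j.val then x.2.2 ⟨j.val - 1, by have := j.isLt; omega⟩ else x.1))
        (fun y => (y.2.2 ⟨0, by omega⟩, (y.1,
          fun j : Fin (n - (k.val+1)) => y.2.2 ⟨j.val + 1, by have := j.isLt; omega⟩)))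
        ?_ ?_
      · intro ω
        refine Prod.ext rfl (Prod.ext ?_ ?_)
        · funext j
          exact absurd j.isLt (by omega)
        · funext j
          have hj := j.isLt
          by_cases h : 0 < j.val
          · simp only [dif_pos h]
            exact apply_fin_congr (Y2 ω) _ _ (by simp only [Fin.val_mk]; omega)
          · simp only [dif_neg h]
            exact apply_fin_congr (Y2 ω) _ _ (by omega)
      · intro ω
        refine Prod.ext ?_ (Prod.ext rfl ?_)
        · exact apply_fin_congr (Y2 ω) _ _ (by simp only [Fin.val_mk]; omega)
        · funext j
          exact apply_fin_congr (Y2 ω) _ _ (by simp only [Fin.val_mk]; omega)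
    have e3 : entOf p (fun ω => (prefixSeq n (Y1 ω) k.val, Y2 ω k,
          (M ω, suffixSeq n (Y2 ω) (k.val+1))))
        = E k.val k.val := by
      refine entOf_congr p _ _
        (fun x => (x.2.2.1, x.1,
          fun j : Fin (n - k.val) =>
            if h : 0 < j.val then x.2.2.2 ⟨j.val - 1, by have := j.isLt; omega⟩ else x.2.1))
        (fun y => (y.2.1, y.2.2 ⟨0, by omega⟩, (y.1,
          fun j : Fin (n - (k.val+1)) => y.2.2 ⟨j.val + 1, by have := j.isLt; omega⟩)))
        ?_ ?_
      · intro ω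
        refine Prod.ext rfl (Prod.ext rfl ?_)
        funext j
        have hj := j.isLt
        by_cases h : 0 < j.val
        · simp only [dif_pos h]
          exact apply_fin_congr (Y2 ω) _ _ (by simp only [Fin.val_mk]; omega)
        · simp only [dif_neg h]
          exact apply_fin_congr (Y2 ω) _ _ (by omega)
      · intro ω
        refine Prod.ext rfl (Prod.ext ?_ (Prod.ext rfl ?_))
        · exact apply_fin_congr (Y2 ω) _ _ (by simp only [Fin.val_mk]; omega)
        · funext j
          exact apply_fin_congr (Y2 ω) _ _ (by simp only [Fin.val_mk]; omega)
    have e4 : entOf p (fun ω => (M ω, suffixSeq n (Y2 ω) (k.val+1))) = E 0 (k.val+1) := by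
      refine entOf_congr p _ _
        (fun x => (x.1, fun j : Fin (min 0 n) => absurd j.isLt (by omega), x.2))
        (fun y => (y.1, y.2.2)) ?_ (fun ω => rfl)
      intro ω
      refine Prod.ext rfl (Prod.ext ?_ rfl)
      funext j
      exact absurd j.isLt (by omega)
    rw [e1, e2, e3, e4]
  rw [Finset.sum_congr rfl (fun k _ => h1 k), Finset.sum_congr rfl (fun k _ => h2 k)]
  rw [Fin.sum_univ_eq_sum_range (fun k => E k (k+1) + E (k+1) n - E (k+1) (k+1) - E k n) n,
      Fin.sum_univ_eq_sum_range (fun k => E k (k+1) + E 0 k - E k k - E 0 (k+1)) n]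
  exact telescope E n
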